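/- Let q(x,ξ) = (1/2) c(x) ξ² + 2 ∫_{(0,∞)} (1 − cos(ξ y)) ν(x,dy) be a one-dimensional symmetric symbol (bounded c ≥ 0, Lévy kernel ν with sup_x ∫ min{1,y²} ν(x,dy) < ∞). For x ∈ ℝ and 0 ≤ y ≤ r define R(x,r,y) := ν(x, ⋃_{n=0}^∞ (2nr + y, 2(n+1)r − y]). Assume lim_{ξ→0} inf_{x∈ℝ} q(x,ξ)/ξ² = ∞. Then there exists r > 0 with ∫_{{|ξ|<r}} dξ / inf_{x∈ℝ} q(x,ξ) < ∞ if and only if ∫_ρ^∞ ( inf_{x∈ℝ} ∫_0^r y R(x,r,y) dy )^{-1} dr < ∞ for all sufficiently large ρ > 0. -/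

import Mathlib

open MeasureTheory Filter Topology
open scoped ENNReal

/-- A one-dimensional symmetric symbol:
`q(x,ξ) = (1/2)c(x)ξ² + 2∫_{(0,∞)} (1 − cos(ξy)) ν(x,dy)`, valued in `[0,∞]`. -/
noncomputable def oneDimSymbol (c : ℝ → ℝ) (ν : ℝ → MeasureTheory.Measure ℝ)
    (x ξ : ℝ) : ℝ≥0∞ :=
  ENNReal.ofReal ((1 / 2) * c x * ξ ^ 2) +
    2 * ∫⁻ y in Set.Ioi (0 : ℝ), ENNReal.ofReal (1 - Real.cos (ξ * y)) ∂(ν x)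

/-- `R(x,r,y) = ν(x, ⋃ₙ (2nr + y, 2(n+1)r − y])`. -/
noncomputable def Rcyl (ν : ℝ → MeasureTheory.Measure ℝ) (x r y : ℝ) : ℝ≥0∞ :=
  ν x (⋃ n : ℕ, Set.Ioc (2 * (n : ℝ) * r + y) (2 * ((n : ℝ) + 1) * r - y))

section Aux

noncomputable def fold (r z : ℝ) : ℝ :=
  min (z - 2*r*⌊z/(2*r)⌋) (2*r - (z - 2*r*⌊z/(2*r)⌋))

open Real

lemma fold_nonneg {r z : ℝ} (hr : 0 < r) : 0 ≤ fold r z := by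
  have h2r : 0 < 2*r := by linarith
  have h1 : (⌊z/(2*r)⌋ : ℝ) ≤ z/(2*r) := Int.floor_le _
  have h2 : z/(2*r) < ⌊z/(2*r)⌋ + 1 := Int.lt_floor_add_one _
  have hw1 : 2*r*⌊z/(2*r)⌋ ≤ z := by
    have := (le_div_iff₀ h2r).mp h1
    linarith
  have hw2 : z < 2*r*⌊z/(2*r)⌋ + 2*r := by
    have := (div_lt_iff₀ h2r).mp h2
    linarith
  exact le_min (by linarith) (by linarith)

lemma fold_le {r z : ℝ} (hr : 0 < r) : fold r z ≤ r := by
  rcases le_total (z - 2*r*⌊z/(2*r)⌋) r with h | h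
  · exact le_trans (min_le_left _ _) h
  · exact le_trans (min_le_right _ _) (by linarith)

lemma cos_fold {r : ℝ} (hr : 0 < r) (z : ℝ) :
    Real.cos (π/r * z) = Real.cos (π/r * fold r z) := by
  have h2r : (2*r) ≠ 0 := by positivity
  set n := ⌊z/(2*r)⌋ with hn
  set w := z - 2*r*n with hw
  have hz : z = w + 2*r*n := by ring
  have h1 : Real.cos (π/r * z) = Real.cos (π/r * w) := by
    rw [hz]
    have : π/r * (w + 2*r*n) = π/r * w + n * (2*π) := by
      field_simp
    rw [this, Real.cos_add_int_mul_two_pi]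
  rw [h1]
  have hf : fold r z = min w (2*r - w) := rfl
  rcases le_total w r with h | h
  · have : fold r z = w := by rw [hf]; exact min_eq_left (by linarith)
    rw [this]
  · have : fold r z = 2*r - w := by rw [hf]; exact min_eq_right (by linarith)
    rw [this]
    have h2 : π/r * (2*r - w) = 2*π - π/r * w := by field_simp
    rw [h2, Real.cos_two_pi_sub]

lemma one_sub_cos_le (s : ℝ) : 1 - Real.cos s ≤ s^2/2 := by
  have h := Real.sin_sq_eq_half_sub (s/2)
  have h2 : (2:ℝ) * (s/2) = s := by ring
  rw [h2] at h
  have h3 : Real.sin (s/2)^2 ≤ (s/2)^2 := Real.sin_sq_le_sq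
  nlinarith

lemma le_one_sub_cos {s : ℝ} (h0 : 0 ≤ s) (h1 : s ≤ π) :
    2/π^2 * s^2 ≤ 1 - Real.cos s := by
  have hπ := Real.pi_pos
  have h := Real.sin_sq_eq_half_sub (s/2)
  have h2 : (2:ℝ) * (s/2) = s := by ring
  rw [h2] at h
  have h3 : 2/π * (s/2) ≤ Real.sin (s/2) :=
    Real.mul_le_sin (by linarith) (by linarith)
  have h4 : 0 ≤ 2/π * (s/2) := by positivity
  have h5 := mul_self_le_mul_self h4 h3
  have h6 : (2/π*(s/2)) * (2/π*(s/2)) = s^2/π^2 := by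
    field_simp
  rw [h6] at h5
  have h7 : 2/π^2 * s^2 = 2*(s^2/π^2) := by ring
  nlinarith

lemma mem_U {r y z : ℝ} (hr : 0 < r) (hy : 0 < y) :
    z ∈ (⋃ n : ℕ, Set.Ioc (2*(n:ℝ)*r + y) (2*((n:ℝ)+1)*r - y)) ↔
    (0 < z ∧ y < z - 2*r*⌊z/(2*r)⌋ ∧ y ≤ 2*r - (z - 2*r*⌊z/(2*r)⌋)) := by
  have h2r : (0:ℝ) < 2*r := by linarith
  simp only [Set.mem_iUnion, Set.mem_Ioc]
  constructor
  · rintro ⟨n, h1, h2⟩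
    have hn0 : (0:ℝ) ≤ 2*(n:ℝ)*r := by positivity
    have hz : 0 < z := by linarith
    have hfl : ⌊z/(2*r)⌋ = (n:ℤ) := by
      rw [Int.floor_eq_iff]
      constructor
      · push_cast
        rw [le_div_iff₀ h2r]; nlinarith
      · push_cast
        rw [div_lt_iff₀ h2r]; nlinarith
    refine ⟨hz, ?_, ?_⟩ <;> rw [hfl] <;> push_cast <;> nlinarith
  · rintro ⟨hz, h1, h2⟩
    have hfl0 : (0:ℤ) ≤ ⌊z/(2*r)⌋ := Int.floor_nonneg.mpr (by positivity)
    refine ⟨⌊z/(2*r)⌋.toNat, ?_, ?_⟩ <;>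
      rw [show ((⌊z/(2*r)⌋.toNat : ℕ) : ℝ) = (⌊z/(2*r)⌋ : ℝ) by
        rw [← Int.cast_natCast, Int.toNat_of_nonneg hfl0]] <;> nlinarith

lemma lint_Ioc (a : ℝ) (ha : 0 ≤ a) :
    ∫⁻ y in Set.Ioc 0 a, ENNReal.ofReal y = ENNReal.ofReal (a^2/2) := by
  have hint : IntegrableOn (fun y : ℝ => y) (Set.Ioc 0 a) := by
    apply (continuous_id.continuousOn).integrableOn_compact (isCompact_Icc (a := 0) (b := a)) |>.mono_set
    exact Set.Ioc_subset_Icc_self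
  rw [← ofReal_integral_eq_lintegral_ofReal hint]
  · congr 1
    rw [← intervalIntegral.integral_of_le ha]
    simp [integral_id]
  · exact (ae_restrict_mem measurableSet_Ioc).mono (fun y hy => le_of_lt hy.1)

lemma lint_Ioo (a : ℝ) (ha : 0 ≤ a) :
    ∫⁻ y in Set.Ioo 0 a, ENNReal.ofReal y = ENNReal.ofReal (a^2/2) := by
  rw [← lint_Ioc a ha]
  apply setLIntegral_congr
  exact Ioo_ae_eq_Ioc

lemma sigmaFinite_restrict_Ioi (μ : Measure ℝ)
    (h : ∀ ε : ℝ, 0 < ε → μ (Set.Ioi ε) < ∞) :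
    SigmaFinite (μ.restrict (Set.Ioi 0)) := by
  constructor
  refine ⟨⟨fun n => Set.Ioi (1/(n+1) : ℝ) ∪ Set.Iic 0, fun _ => trivial, fun n => ?_, ?_⟩⟩
  · have h1 : (μ.restrict (Set.Ioi 0)) (Set.Ioi (1/(n+1):ℝ)) ≤ μ (Set.Ioi (1/(n+1):ℝ)) := by
      rw [Measure.restrict_apply measurableSet_Ioi]
      exact measure_mono Set.inter_subset_left
    have h2 : (μ.restrict (Set.Ioi 0)) (Set.Iic 0) = 0 := by
      rw [Measure.restrict_apply measurableSet_Iic]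
      convert measure_empty (μ := μ)
      ext t; simp only [Set.mem_inter_iff, Set.mem_Iic, Set.mem_Ioi, Set.mem_empty_iff_false,
        iff_false, not_and]; intro h1 h2; linarith
    calc (μ.restrict (Set.Ioi 0)) (Set.Ioi (1/(n+1):ℝ) ∪ Set.Iic 0)
        ≤ _ + _ := measure_union_le _ _
      _ < ∞ := by
          rw [h2]
          have := h (1/(n+1):ℝ) (by positivity)
          exact lt_of_le_of_lt (by simpa using h1) (by simpa using this)
  · ext z
    simp only [Set.mem_iUnion, Set.mem_union, Set.mem_Ioi, Set.mem_Iic, Set.mem_univ, iff_true]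
    rcases le_or_gt z 0 with hz | hz
    · exact ⟨0, Or.inr hz⟩
    · obtain ⟨n, hn⟩ := exists_nat_one_div_lt hz
      exact ⟨n, Or.inl hn⟩

lemma F_eq (μ : Measure ℝ) (hsf : SigmaFinite (μ.restrict (Set.Ioi 0))) {r : ℝ} (hr : 0 < r) :
    ∫⁻ y in Set.Ioc 0 r, ENNReal.ofReal y *
      μ (⋃ n : ℕ, Set.Ioc (2*(n:ℝ)*r + y) (2*((n:ℝ)+1)*r - y)) =
    ∫⁻ z in Set.Ioi 0, ENNReal.ofReal (fold r z ^ 2 / 2) ∂μ := by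
  haveI := hsf
  set μ2 := μ.restrict (Set.Ioi 0) with hμ2
  set U : ℝ → Set ℝ := fun y => ⋃ n : ℕ, Set.Ioc (2*(n:ℝ)*r + y) (2*((n:ℝ)+1)*r - y) with hU
  have hUm : ∀ y, MeasurableSet (U y) := fun y => MeasurableSet.iUnion fun n => measurableSet_Ioc
  have hUsub : ∀ y : ℝ, 0 < y → U y ⊆ Set.Ioi 0 := by
    intro y hy z hz
    simp only [hU, Set.mem_iUnion, Set.mem_Ioc] at hz
    obtain ⟨n, h1, h2⟩ := hz
    have : (0:ℝ) ≤ 2*(n:ℝ)*r := by positivity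
    simp only [Set.mem_Ioi]; linarith
  have step1 : ∫⁻ y in Set.Ioc 0 r, ENNReal.ofReal y * μ (U y) =
      ∫⁻ y in Set.Ioc 0 r, ∫⁻ z, ENNReal.ofReal y * (U y).indicator (fun _ => 1) z ∂μ2 := by
    apply setLIntegral_congr_fun measurableSet_Ioc
    intro y hy
    dsimp only
    rw [lintegral_const_mul' _ _ ENNReal.ofReal_ne_top,
      lintegral_indicator_const (hUm y)]
    rw [hμ2, Measure.restrict_apply (hUm y), Set.inter_eq_left.mpr (hUsub y hy.1)]
    ring
  have hA : MeasurableSet {p : ℝ × ℝ | p.2 ∈ U p.1} := by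
    have : {p : ℝ × ℝ | p.2 ∈ U p.1} =
        ⋃ n : ℕ, ({p : ℝ × ℝ | 2*(n:ℝ)*r + p.1 < p.2} ∩ {p : ℝ × ℝ | p.2 ≤ 2*((n:ℝ)+1)*r - p.1}) := by
      ext p
      simp only [hU, Set.mem_iUnion, Set.mem_Ioc, Set.mem_setOf_eq, Set.mem_inter_iff]
    rw [this]
    refine MeasurableSet.iUnion fun n => (MeasurableSet.inter ?_ ?_)
    · exact measurableSet_lt (measurable_const.add measurable_fst) measurable_snd
    · exact measurableSet_le measurable_snd (measurable_const.sub measurable_fst)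
  have hmeas : AEMeasurable (Function.uncurry fun y z =>
      ENNReal.ofReal y * (U y).indicator (fun _ => (1:ℝ≥0∞)) z)
      ((volume.restrict (Set.Ioc 0 r)).prod μ2) := by
    have heq : (Function.uncurry fun y z =>
        ENNReal.ofReal y * (U y).indicator (fun _ => (1:ℝ≥0∞)) z) =
        fun p : ℝ × ℝ => ENNReal.ofReal p.1 *
          ({p : ℝ × ℝ | p.2 ∈ U p.1}).indicator (fun _ => (1:ℝ≥0∞)) p := by
      funext p
      rfl
    rw [heq]
    exact ((ENNReal.measurable_ofReal.comp measurable_fst).mul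
      (measurable_const.indicator hA)).aemeasurable
  have step2 := lintegral_lintegral_swap hmeas
  rw [step1, step2]
  have step3 : ∀ᵐ z ∂μ2, (∫⁻ y in Set.Ioc 0 r,
      ENNReal.ofReal y * (U y).indicator (fun _ => (1:ℝ≥0∞)) z) =
      ENNReal.ofReal (fold r z ^ 2 / 2) := by
    filter_upwards [ae_restrict_mem measurableSet_Ioi] with z hz
    have hzpos : (0:ℝ) < z := hz
    set S : Set ℝ := {y : ℝ | z ∈ U y} with hS
    have hSm : MeasurableSet S := by
      have : S = ⋃ n : ℕ, (Set.Iio (z - 2*(n:ℝ)*r) ∩ Set.Iic (2*((n:ℝ)+1)*r - z)) := by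
        ext y
        simp only [hS, hU, Set.mem_iUnion, Set.mem_Ioc, Set.mem_setOf_eq, Set.mem_inter_iff,
          Set.mem_Iio, Set.mem_Iic]
        constructor
        · rintro ⟨n, h1, h2⟩; exact ⟨n, by linarith, by linarith⟩
        · rintro ⟨n, h1, h2⟩; exact ⟨n, by linarith, by linarith⟩
      rw [this]
      exact MeasurableSet.iUnion fun n => (measurableSet_Iio.inter measurableSet_Iic)
    have hind : ∀ y : ℝ, ENNReal.ofReal y * (U y).indicator (fun _ => (1:ℝ≥0∞)) z =
        S.indicator (fun y => ENNReal.ofReal y) y := by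
      intro y
      by_cases h : z ∈ U y
      · rw [Set.indicator_of_mem h, Set.indicator_of_mem (by exact h), mul_one]
      · rw [Set.indicator_of_notMem h, Set.indicator_of_notMem (by exact h), mul_zero]
    simp only [hind]
    rw [lintegral_indicator hSm, Measure.restrict_restrict hSm]
    set g := fold r z with hgdef
    have hfoldeq : fold r z = min (z - 2*r*⌊z/(2*r)⌋) (2*r - (z - 2*r*⌊z/(2*r)⌋)) := rfl
    have hg0 : 0 ≤ g := fold_nonneg hr
    have hgr : g ≤ r := fold_le hr
    have hsub1 : Set.Ioo 0 g ⊆ S ∩ Set.Ioc 0 r := by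
      rintro y ⟨hy0, hyg⟩
      have hyr : y ≤ r := le_trans hyg.le hgr
      constructor
      · show z ∈ U y
        rw [hU]
        refine (mem_U hr hy0).mpr ⟨hzpos, ?_, ?_⟩
        · calc y < g := hyg
            _ ≤ _ := by rw [hgdef, hfoldeq]; exact min_le_left _ _
        · calc y ≤ g := hyg.le
            _ ≤ _ := by rw [hgdef, hfoldeq]; exact min_le_right _ _
      · exact ⟨hy0, hyr⟩
    have hsub2 : S ∩ Set.Ioc 0 r ⊆ Set.Ioc 0 g := by
      rintro y ⟨hyS, hy0, hyr⟩
      have hmem : z ∈ U y := hyS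
      rw [hU] at hmem
      obtain ⟨_, h1, h2⟩ := (mem_U hr hy0).mp hmem
      refine ⟨hy0, ?_⟩
      rw [hgdef, hfoldeq]
      exact le_min h1.le h2
    have hle1 : ENNReal.ofReal (g^2/2) ≤ ∫⁻ y in S ∩ Set.Ioc 0 r, ENNReal.ofReal y := by
      rw [← lint_Ioo g hg0]
      exact lintegral_mono' (Measure.restrict_mono hsub1 le_rfl) le_rfl
    have hle2 : ∫⁻ y in S ∩ Set.Ioc 0 r, ENNReal.ofReal y ≤ ENNReal.ofReal (g^2/2) := by
      rw [← lint_Ioc g hg0]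
      exact lintegral_mono' (Measure.restrict_mono hsub2 le_rfl) le_rfl
    exact le_antisymm hle2 hle1
  rw [lintegral_congr_ae step3]

lemma cos_pointwise_lb {r : ℝ} (hr : 0 < r) (z : ℝ) :
    4/r^2 * (fold r z ^2 / 2) ≤ 1 - Real.cos (π/r * z) := by
  have hπ := pi_pos
  rw [cos_fold hr z]
  set g := fold r z with hg
  have hg0 : 0 ≤ g := fold_nonneg hr
  have hgr : g ≤ r := fold_le hr
  have hs0 : 0 ≤ π/r * g := by positivity
  have hs1 : π/r * g ≤ π := by
    have h := mul_le_mul_of_nonneg_left hgr (le_of_lt (div_pos hπ hr))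
    rwa [div_mul_cancel₀ _ hr.ne'] at h
  have := le_one_sub_cos hs0 hs1
  have heq : 2/π^2 * (π/r * g)^2 = 4/r^2 * (g^2/2) := by
    field_simp
    ring
  linarith [this, heq.ge]

lemma cos_pointwise_ub {r : ℝ} (hr : 0 < r) (z : ℝ) :
    1 - Real.cos (π/r * z) ≤ π^2/r^2 * (fold r z ^2 / 2) := by
  rw [cos_fold hr z]
  set g := fold r z with hg
  have := one_sub_cos_le (π/r * g)
  have heq : (π/r * g)^2/2 = π^2/r^2 * (g^2/2) := by
    field_simp
  linarith

lemma symb_lb (c : ℝ → ℝ) (ν : ℝ → Measure ℝ) (x : ℝ) {r : ℝ} (hr : 0 < r)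
    (hsf : SigmaFinite ((ν x).restrict (Set.Ioi 0))) :
    ENNReal.ofReal (8/r^2) * (∫⁻ y in Set.Ioc 0 r, ENNReal.ofReal y * Rcyl ν x r y) ≤
      oneDimSymbol c ν x (π/r) := by
  have hT : (∫⁻ y in Set.Ioc 0 r, ENNReal.ofReal y * Rcyl ν x r y) =
      ∫⁻ z in Set.Ioi 0, ENNReal.ofReal (fold r z ^ 2 / 2) ∂(ν x) := F_eq (ν x) hsf hr
  rw [hT]
  have key : ENNReal.ofReal (4/r^2) * (∫⁻ z in Set.Ioi 0, ENNReal.ofReal (fold r z ^ 2 / 2) ∂(ν x))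
      ≤ ∫⁻ y in Set.Ioi (0:ℝ), ENNReal.ofReal (1 - Real.cos (π/r * y)) ∂(ν x) := by
    rw [← lintegral_const_mul' _ _ ENNReal.ofReal_ne_top]
    apply lintegral_mono
    intro z
    dsimp only
    rw [← ENNReal.ofReal_mul (by positivity)]
    exact ENNReal.ofReal_le_ofReal (cos_pointwise_lb hr z)
  have h2 : (2:ℝ≥0∞) * ENNReal.ofReal (4/r^2) = ENNReal.ofReal (8/r^2) := by
    rw [← ENNReal.ofReal_ofNat, ← ENNReal.ofReal_mul (by norm_num)]
    congr 1
    ring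
  calc ENNReal.ofReal (8/r^2) * (∫⁻ z in Set.Ioi 0, ENNReal.ofReal (fold r z ^ 2 / 2) ∂(ν x))
      = 2 * (ENNReal.ofReal (4/r^2) *
        (∫⁻ z in Set.Ioi 0, ENNReal.ofReal (fold r z ^ 2 / 2) ∂(ν x))) := by
        rw [← mul_assoc, h2]
    _ ≤ 2 * ∫⁻ y in Set.Ioi (0:ℝ), ENNReal.ofReal (1 - Real.cos (π/r * y)) ∂(ν x) := by
        exact mul_le_mul_right key 2
    _ ≤ oneDimSymbol c ν x (π/r) := le_add_self

lemma symb_ub (c : ℝ → ℝ) (ν : ℝ → Measure ℝ) (x : ℝ) {r : ℝ} (hr : 0 < r)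
    (hsf : SigmaFinite ((ν x).restrict (Set.Ioi 0))) :
    oneDimSymbol c ν x (π/r) ≤ ENNReal.ofReal (π^2/(2*r^2) * c x) +
      ENNReal.ofReal (2*π^2/r^2) * (∫⁻ y in Set.Ioc 0 r, ENNReal.ofReal y * Rcyl ν x r y) := by
  have hT : (∫⁻ y in Set.Ioc 0 r, ENNReal.ofReal y * Rcyl ν x r y) =
      ∫⁻ z in Set.Ioi 0, ENNReal.ofReal (fold r z ^ 2 / 2) ∂(ν x) := F_eq (ν x) hsf hr
  rw [hT]
  have key : (∫⁻ y in Set.Ioi (0:ℝ), ENNReal.ofReal (1 - Real.cos (π/r * y)) ∂(ν x))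
      ≤ ENNReal.ofReal (π^2/r^2) *
        ∫⁻ z in Set.Ioi 0, ENNReal.ofReal (fold r z ^ 2 / 2) ∂(ν x) := by
    rw [← lintegral_const_mul' _ _ ENNReal.ofReal_ne_top]
    apply lintegral_mono
    intro z
    dsimp only
    rw [← ENNReal.ofReal_mul (by positivity)]
    exact ENNReal.ofReal_le_ofReal (cos_pointwise_ub hr z)
  unfold oneDimSymbol
  have h1 : ENNReal.ofReal ((1/2) * c x * (π/r)^2) = ENNReal.ofReal (π^2/(2*r^2) * c x) := by
    congr 1
    field_simp
  rw [h1]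
  apply add_le_add_right
  have h2 : (2:ℝ≥0∞) * ENNReal.ofReal (π^2/r^2) = ENNReal.ofReal (2*π^2/r^2) := by
    rw [← ENNReal.ofReal_ofNat, ← ENNReal.ofReal_mul (by norm_num)]
    congr 1
    ring
  calc 2 * ∫⁻ y in Set.Ioi (0:ℝ), ENNReal.ofReal (1 - Real.cos (π/r * y)) ∂(ν x)
      ≤ 2 * (ENNReal.ofReal (π^2/r^2) *
        (∫⁻ z in Set.Ioi 0, ENNReal.ofReal (fold r z ^ 2 / 2) ∂(ν x))) := mul_le_mul_right key 2
    _ = ENNReal.ofReal (2*π^2/r^2) *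
        (∫⁻ z in Set.Ioi 0, ENNReal.ofReal (fold r z ^ 2 / 2) ∂(ν x)) := by
        rw [← mul_assoc, h2]

lemma symb_neg (c : ℝ → ℝ) (ν : ℝ → Measure ℝ) (x ξ : ℝ) :
    oneDimSymbol c ν x (-ξ) = oneDimSymbol c ν x ξ := by
  unfold oneDimSymbol
  simp [neg_mul, Real.cos_neg, neg_sq]

lemma lint_cov {s : Set ℝ} {f f' : ℝ → ℝ} (hs : MeasurableSet s)
    (hf' : ∀ x ∈ s, HasDerivWithinAt f (f' x) s x) (hf : Set.InjOn f s) (g : ℝ → ℝ≥0∞) :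
    ∫⁻ x in f '' s, g x = ∫⁻ x in s, ENNReal.ofReal |f' x| * g (f x) := by
  simpa only [ContinuousLinearMap.det_toSpanSingleton] using
    lintegral_image_eq_lintegral_abs_det_fderiv_mul volume hs
      (fun x hx => (hf' x hx).hasFDerivWithinAt) hf g

lemma image_pi_div {ρ : ℝ} (hρ : 0 < ρ) :
    (fun r : ℝ => π/r) '' Set.Ioi ρ = Set.Ioo 0 (π/ρ) := by
  have hπ := pi_pos
  ext t
  simp only [Set.mem_image, Set.mem_Ioi, Set.mem_Ioo]
  constructor
  · rintro ⟨r, hr, rfl⟩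
    have hr0 : 0 < r := lt_trans hρ hr
    refine ⟨by positivity, ?_⟩
    rw [div_lt_div_iff₀ hr0 hρ]
    nlinarith
  · rintro ⟨ht0, htρ⟩
    refine ⟨π/t, ?_, ?_⟩
    · rw [lt_div_iff₀ ht0]
      rw [lt_div_iff₀ hρ] at htρ
      nlinarith
    · field_simp

lemma image_neg_Ioo {a : ℝ} :
    (fun t : ℝ => -t) '' Set.Ioo 0 a = Set.Ioo (-a) 0 := by
  ext t
  simp only [Set.mem_image, Set.mem_Ioo]
  constructor
  · rintro ⟨u, ⟨h1, h2⟩, rfl⟩; constructor <;> linarith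
  · rintro ⟨h1, h2⟩; exact ⟨-t, ⟨by linarith, by linarith⟩, by ring⟩

end Aux

/-- characterization of the Chung–Fuchs transience condition in terms of
the Lévy measure via the quantity `R(x,r,y)`, under condition (3.2). -/
theorem stmt14 (c : ℝ → ℝ) (ν : ℝ → MeasureTheory.Measure ℝ)
    (hc : ∀ x, 0 ≤ c x) (hcb : ∃ K : ℝ, ∀ x, c x ≤ K)
    (hν : (⨆ x, ∫⁻ y in Set.Ioi (0 : ℝ), ENNReal.ofReal (min 1 (y ^ 2)) ∂(ν x)) < ∞)
    (hmq : Measurable fun ξ : ℝ => ⨅ x, oneDimSymbol c ν x ξ)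
    (hmR : Measurable fun r : ℝ =>
      ⨅ x, ∫⁻ y in Set.Ioc (0 : ℝ) r, ENNReal.ofReal y * Rcyl ν x r y)
    (hlim : Tendsto (fun ξ : ℝ => (⨅ x, oneDimSymbol c ν x ξ) / ENNReal.ofReal (ξ ^ 2))
      (𝓝[≠] (0 : ℝ)) (𝓝 ∞)) :
    (∃ r > (0 : ℝ), ∫⁻ ξ in Metric.ball (0 : ℝ) r,
        (⨅ x, oneDimSymbol c ν x ξ)⁻¹ < ∞) ↔
      (∃ ρ₀ > (0 : ℝ), ∀ ρ : ℝ, ρ₀ ≤ ρ →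
        ∫⁻ r in Set.Ioi ρ,
          (⨅ x, ∫⁻ y in Set.Ioc (0 : ℝ) r, ENNReal.ofReal y * Rcyl ν x r y)⁻¹ < ∞) := by
  classical
  obtain ⟨K, hK⟩ := hcb
  have hπ := Real.pi_pos
  have hK0 : (0:ℝ) ≤ K := le_trans (hc 0) (hK 0)
  -- sigma-finiteness of the restricted Lévy measures
  have hσ : ∀ x, SigmaFinite ((ν x).restrict (Set.Ioi 0)) := by
    intro x
    apply sigmaFinite_restrict_Ioi
    intro ε hε
    have hx : ∫⁻ y in Set.Ioi (0:ℝ), ENNReal.ofReal (min 1 (y^2)) ∂(ν x) < ∞ :=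
      lt_of_le_of_lt (le_iSup (fun x =>
        ∫⁻ y in Set.Ioi (0:ℝ), ENNReal.ofReal (min 1 (y^2)) ∂(ν x)) x) hν
    have hmin : (0:ℝ) < min 1 (ε^2) := lt_min one_pos (by positivity)
    have h1 : ENNReal.ofReal (min 1 (ε^2)) * (ν x) (Set.Ioi ε) ≤
        ∫⁻ y in Set.Ioi (0:ℝ), ENNReal.ofReal (min 1 (y^2)) ∂(ν x) := by
      calc ENNReal.ofReal (min 1 (ε^2)) * (ν x) (Set.Ioi ε)
          = ∫⁻ _ in Set.Ioi ε, ENNReal.ofReal (min 1 (ε^2)) ∂(ν x) := by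
            rw [setLIntegral_const]
        _ ≤ ∫⁻ y in Set.Ioi ε, ENNReal.ofReal (min 1 (y^2)) ∂(ν x) := by
            apply lintegral_mono_ae
            filter_upwards [ae_restrict_mem measurableSet_Ioi] with y hy
            apply ENNReal.ofReal_le_ofReal
            have hεy : ε ≤ y := le_of_lt hy
            exact min_le_min le_rfl (by nlinarith)
        _ ≤ _ := lintegral_mono' (Measure.restrict_mono (Set.Ioi_subset_Ioi hε.le) le_rfl) le_rfl
    by_contra hcon
    rw [not_lt, top_le_iff] at hcon
    rw [hcon, ENNReal.mul_top (ENNReal.ofReal_pos.mpr hmin).ne'] at h1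
    exact absurd (lt_of_le_of_lt h1 hx) (lt_irrefl _)
  -- extract uniform lower bound from condition (3.2)
  have hev : ∀ᶠ ξ in 𝓝[≠] (0:ℝ), ENNReal.ofReal K ≤
      (⨅ x, oneDimSymbol c ν x ξ) / ENNReal.ofReal (ξ^2) :=
    hlim.eventually_const_le ENNReal.ofReal_lt_top
  rw [eventually_nhdsWithin_iff, Metric.eventually_nhds_iff] at hev
  obtain ⟨ε, hε, hevs⟩ := hev
  set R₀ : ℝ := max (Real.pi/ε + 1) 1 with hR₀
  have hR₀pos : (0:ℝ) < R₀ := lt_of_lt_of_le one_pos (le_max_right _ _)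
  have hKb : ∀ r : ℝ, R₀ ≤ r → ENNReal.ofReal K * ENNReal.ofReal ((Real.pi/r)^2) ≤
      (⨅ x, oneDimSymbol c ν x (Real.pi/r)) := by
    intro r hrR
    have hr0 : 0 < r := lt_of_lt_of_le hR₀pos hrR
    have hrε : Real.pi/r < ε := by
      have h1 : Real.pi/ε + 1 ≤ r := le_trans (le_max_left _ _) hrR
      rw [div_lt_iff₀ hr0]
      have h2 : Real.pi/ε < r := by linarith
      rw [div_lt_iff₀ hε] at h2
      nlinarith
    have hne : (Real.pi/r) ≠ 0 := by positivity
    have hdist : dist (Real.pi/r) (0:ℝ) < ε := by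
      rw [Real.dist_eq, sub_zero, abs_of_pos (by positivity)]
      exact hrε
    have h3 := hevs hdist (by simpa using hne)
    exact (ENNReal.le_div_iff_mul_le
      (Or.inl (ENNReal.ofReal_pos.mpr (by positivity)).ne')
      (Or.inl ENNReal.ofReal_ne_top)).mp h3
  -- lower bound for the infimum symbol
  have hHlb : ∀ r : ℝ, 0 < r →
      ENNReal.ofReal (8/r^2) *
        (⨅ x, ∫⁻ y in Set.Ioc (0:ℝ) r, ENNReal.ofReal y * Rcyl ν x r y)
        ≤ (⨅ x, oneDimSymbol c ν x (Real.pi/r)) := by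
    intro r hr0
    apply le_iInf
    intro x
    refine le_trans ?_ (symb_lb c ν x hr0 (hσ x))
    exact mul_le_mul_right (iInf_le _ x) _
  -- upper bound for the infimum symbol, for large r
  have hHub : ∀ r : ℝ, R₀ ≤ r →
      (⨅ x, oneDimSymbol c ν x (Real.pi/r)) ≤ ENNReal.ofReal (4*Real.pi^2/r^2) *
        (⨅ x, ∫⁻ y in Set.Ioc (0:ℝ) r, ENNReal.ofReal y * Rcyl ν x r y) := by
    intro r hrR
    have hr0 : 0 < r := lt_of_lt_of_le hR₀pos hrR
    set G := (⨅ x, ∫⁻ y in Set.Ioc (0:ℝ) r, ENNReal.ofReal y * Rcyl ν x r y) with hG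
    set C := ENNReal.ofReal (Real.pi^2/(2*r^2)*K) with hC
    set D := ENNReal.ofReal (2*Real.pi^2/r^2) with hD
    have hub1 : (⨅ x, oneDimSymbol c ν x (Real.pi/r)) ≤ C + D * G := by
      have step : (⨅ x, oneDimSymbol c ν x (Real.pi/r)) ≤
          ⨅ x, (C + D * ∫⁻ y in Set.Ioc (0:ℝ) r, ENNReal.ofReal y * Rcyl ν x r y) := by
        apply iInf_mono
        intro x
        refine le_trans (symb_ub c ν x hr0 (hσ x)) (add_le_add ?_ le_rfl)
        apply ENNReal.ofReal_le_ofReal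
        have hcc : (0:ℝ) ≤ Real.pi^2/(2*r^2) := by positivity
        exact mul_le_mul_of_nonneg_left (hK x) hcc
      refine le_trans step ?_
      rw [← ENNReal.add_iInf, ← ENNReal.mul_iInf_of_ne
        (ENNReal.ofReal_pos.mpr (by positivity)).ne' ENNReal.ofReal_ne_top, ← hG]
    have hC2 : C + C = ENNReal.ofReal K * ENNReal.ofReal ((Real.pi/r)^2) := by
      have hnn : (0:ℝ) ≤ Real.pi^2/(2*r^2)*K := mul_nonneg (by positivity) hK0
      rw [hC, ← ENNReal.ofReal_add hnn hnn, ← ENNReal.ofReal_mul hK0]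
      congr 1
      field_simp
      ring
    have hCD : C ≤ D * G := by
      have h1 : C + C ≤ C + D * G := by
        rw [hC2]; exact le_trans (hKb r hrR) hub1
      exact (ENNReal.add_le_add_iff_left ENNReal.ofReal_ne_top).mp h1
    calc (⨅ x, oneDimSymbol c ν x (Real.pi/r)) ≤ C + D * G := hub1
      _ ≤ D * G + D * G := add_le_add_left hCD _
      _ = (D + D) * G := (add_mul _ _ _).symm
      _ = ENNReal.ofReal (4*Real.pi^2/r^2) * G := by
          rw [hD, ← ENNReal.ofReal_add (by positivity) (by positivity)]
          congr 2
          ring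
  -- equivalence of finiteness over the ball and over (0, a)
  have ball_iff : ∀ a : ℝ, 0 < a →
      ((∫⁻ ξ in Metric.ball (0:ℝ) a, (⨅ x, oneDimSymbol c ν x ξ)⁻¹) < ∞ ↔
       (∫⁻ ξ in Set.Ioo 0 a, (⨅ x, oneDimSymbol c ν x ξ)⁻¹) < ∞) := by
    intro a ha
    have hball : Metric.ball (0:ℝ) a = Set.Ioo (-a) a := by
      rw [Real.ball_eq_Ioo, zero_sub, zero_add]
    constructor
    · intro h
      refine lt_of_le_of_lt (lintegral_mono' (Measure.restrict_mono ?_ le_rfl) le_rfl) h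
      rw [hball]
      rintro t ⟨ht1, ht2⟩
      exact ⟨by linarith, ht2⟩
    · intro h
      have hneg : (∫⁻ ξ in Set.Ioo (-a) 0, (⨅ x, oneDimSymbol c ν x ξ)⁻¹) =
          ∫⁻ ξ in Set.Ioo 0 a, (⨅ x, oneDimSymbol c ν x ξ)⁻¹ := by
        rw [← image_neg_Ioo,
          lint_cov (f := fun t : ℝ => -t) (f' := fun _ => (-1 : ℝ)) measurableSet_Ioo
            (fun t _ => (hasDerivAt_neg t).hasDerivWithinAt)
            (fun p _ q _ hpq => neg_injective hpq) _]
        apply setLIntegral_congr_fun measurableSet_Ioo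
        intro t _
        simp only [abs_neg, abs_one, ENNReal.ofReal_one, one_mul]
        congr 1
        exact iInf_congr fun x => symb_neg c ν x t
      calc ∫⁻ ξ in Metric.ball (0:ℝ) a, (⨅ x, oneDimSymbol c ν x ξ)⁻¹
          ≤ ∫⁻ ξ in Set.Ioo (-a) 0 ∪ Set.Ico 0 a, (⨅ x, oneDimSymbol c ν x ξ)⁻¹ := by
            refine lintegral_mono' (Measure.restrict_mono ?_ le_rfl) le_rfl
            rw [hball]
            rintro t ⟨h1, h2⟩
            rcases lt_or_ge t 0 with hlt | hle
            · exact Or.inl ⟨h1, hlt⟩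
            · exact Or.inr ⟨hle, h2⟩
        _ ≤ (∫⁻ ξ in Set.Ioo (-a) 0, (⨅ x, oneDimSymbol c ν x ξ)⁻¹) +
            ∫⁻ ξ in Set.Ico 0 a, (⨅ x, oneDimSymbol c ν x ξ)⁻¹ := lintegral_union_le _ _ _
        _ < ∞ := by
            have hIco : (∫⁻ ξ in Set.Ico 0 a, (⨅ x, oneDimSymbol c ν x ξ)⁻¹) =
                ∫⁻ ξ in Set.Ioo 0 a, (⨅ x, oneDimSymbol c ν x ξ)⁻¹ := by
              apply setLIntegral_congr
              exact Ioo_ae_eq_Ico.symm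
            rw [hneg, hIco]
            exact ENNReal.add_lt_top.mpr ⟨h, h⟩
  -- the substitution r ↦ π/r and the two-sided comparison
  have main_comp : ∀ ρ : ℝ, R₀ ≤ ρ →
      ((∫⁻ ξ in Set.Ioo 0 (Real.pi/ρ), (⨅ x, oneDimSymbol c ν x ξ)⁻¹) < ∞ ↔
       (∫⁻ r in Set.Ioi ρ,
         (⨅ x, ∫⁻ y in Set.Ioc (0:ℝ) r, ENNReal.ofReal y * Rcyl ν x r y)⁻¹) < ∞) := by
    intro ρ hρR
    have hρ0 : 0 < ρ := lt_of_lt_of_le hR₀pos hρR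
    have hderiv : ∀ r ∈ Set.Ioi ρ,
        HasDerivWithinAt (fun r : ℝ => Real.pi/r) (-(Real.pi/r^2)) (Set.Ioi ρ) r := by
      intro r hr
      have hr0 : 0 < r := lt_trans hρ0 hr
      have h1 : (fun y : ℝ => Real.pi/y) = fun y : ℝ => Real.pi * y⁻¹ := by
        funext y; rw [div_eq_mul_inv]
      have h2 : -(Real.pi/r^2) = Real.pi * (-(r^2)⁻¹) := by
        rw [div_eq_mul_inv]; ring
      rw [h1, h2]
      exact ((hasDerivAt_inv hr0.ne').const_mul Real.pi).hasDerivWithinAt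
    have hinj : Set.InjOn (fun r : ℝ => Real.pi/r) (Set.Ioi ρ) := by
      intro p hp q hq hpq
      have hp0 : 0 < p := lt_trans hρ0 hp
      have hq0 : 0 < q := lt_trans hρ0 hq
      have e1 : Real.pi / p * p = Real.pi := div_mul_cancel₀ Real.pi hp0.ne'
      have e2 : Real.pi / q * q = Real.pi := div_mul_cancel₀ Real.pi hq0.ne'
      have e3 : Real.pi / q * p = Real.pi := by
        rw [← show Real.pi / p = Real.pi / q from hpq]; exact e1
      have hπq : Real.pi / q ≠ 0 := by positivity
      exact mul_left_cancel₀ hπq (e3.trans e2.symm)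
    have hcov := lint_cov (f := fun r : ℝ => Real.pi/r) (f' := fun r : ℝ => -(Real.pi/r^2))
      measurableSet_Ioi hderiv hinj (fun ξ => (⨅ x, oneDimSymbol c ν x ξ)⁻¹)
    rw [image_pi_div hρ0] at hcov
    have hub : ∀ᵐ r ∂(volume.restrict (Set.Ioi ρ)),
        ENNReal.ofReal |-(Real.pi/r^2)| * (⨅ x, oneDimSymbol c ν x (Real.pi/r))⁻¹ ≤
          ENNReal.ofReal (Real.pi/8) *
            (⨅ x, ∫⁻ y in Set.Ioc (0:ℝ) r, ENNReal.ofReal y * Rcyl ν x r y)⁻¹ := by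
      filter_upwards [ae_restrict_mem measurableSet_Ioi] with r hr
      have hr0 : 0 < r := lt_trans hρ0 hr
      have habs : |-(Real.pi/r^2)| = Real.pi/r^2 := by
        rw [abs_neg, abs_of_pos (by positivity)]
      rw [habs]
      calc ENNReal.ofReal (Real.pi/r^2) * (⨅ x, oneDimSymbol c ν x (Real.pi/r))⁻¹
          ≤ ENNReal.ofReal (Real.pi/r^2) * (ENNReal.ofReal (8/r^2) *
              (⨅ x, ∫⁻ y in Set.Ioc (0:ℝ) r, ENNReal.ofReal y * Rcyl ν x r y))⁻¹ :=
            mul_le_mul_right (ENNReal.inv_le_inv.mpr (hHlb r hr0)) _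
        _ = ENNReal.ofReal (Real.pi/8) *
              (⨅ x, ∫⁻ y in Set.Ioc (0:ℝ) r, ENNReal.ofReal y * Rcyl ν x r y)⁻¹ := by
            rw [ENNReal.mul_inv (Or.inl (ENNReal.ofReal_pos.mpr (by positivity)).ne')
                (Or.inl ENNReal.ofReal_ne_top),
              ← mul_assoc, ← ENNReal.ofReal_inv_of_pos (by positivity),
              ← ENNReal.ofReal_mul (by positivity)]
            congr 2
            rw [inv_div]
            field_simp
    have hlb : ∀ᵐ r ∂(volume.restrict (Set.Ioi ρ)),
        ENNReal.ofReal (1/(4*Real.pi)) *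
            (⨅ x, ∫⁻ y in Set.Ioc (0:ℝ) r, ENNReal.ofReal y * Rcyl ν x r y)⁻¹ ≤
          ENNReal.ofReal |-(Real.pi/r^2)| * (⨅ x, oneDimSymbol c ν x (Real.pi/r))⁻¹ := by
      filter_upwards [ae_restrict_mem measurableSet_Ioi] with r hr
      have hrR : R₀ ≤ r := le_trans hρR (le_of_lt hr)
      have hr0 : 0 < r := lt_trans hρ0 hr
      have habs : |-(Real.pi/r^2)| = Real.pi/r^2 := by
        rw [abs_neg, abs_of_pos (by positivity)]
      rw [habs]
      have e1 : ENNReal.ofReal (Real.pi/r^2) * (ENNReal.ofReal (4*Real.pi^2/r^2) *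
          (⨅ x, ∫⁻ y in Set.Ioc (0:ℝ) r, ENNReal.ofReal y * Rcyl ν x r y))⁻¹ =
          ENNReal.ofReal (1/(4*Real.pi)) *
          (⨅ x, ∫⁻ y in Set.Ioc (0:ℝ) r, ENNReal.ofReal y * Rcyl ν x r y)⁻¹ := by
        rw [ENNReal.mul_inv (Or.inl (ENNReal.ofReal_pos.mpr (by positivity)).ne')
            (Or.inl ENNReal.ofReal_ne_top),
          ← mul_assoc, ← ENNReal.ofReal_inv_of_pos (by positivity),
          ← ENNReal.ofReal_mul (by positivity)]
        congr 2
        rw [inv_div]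
        field_simp
      rw [← e1]
      exact mul_le_mul_right (ENNReal.inv_le_inv.mpr (hHub r hrR)) _
    constructor
    · intro hfin
      rw [hcov] at hfin
      have hge := lintegral_mono_ae hlb
      rw [lintegral_const_mul' _ _ ENNReal.ofReal_ne_top] at hge
      have hlt := lt_of_le_of_lt hge hfin
      by_contra hcon
      rw [not_lt, top_le_iff] at hcon
      rw [hcon, ENNReal.mul_top (ENNReal.ofReal_pos.mpr (by positivity)).ne'] at hlt
      exact absurd hlt (lt_irrefl _)
    · intro hfin
      rw [hcov]
      have hle := lintegral_mono_ae hub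
      rw [lintegral_const_mul' _ _ ENNReal.ofReal_ne_top] at hle
      exact lt_of_le_of_lt hle (ENNReal.mul_lt_top ENNReal.ofReal_lt_top hfin)
  -- final assembly
  constructor
  · rintro ⟨r₀, hr₀, hfin⟩
    refine ⟨max R₀ (Real.pi/r₀), lt_of_lt_of_le hR₀pos (le_max_left _ _), ?_⟩
    intro ρ hρ
    have hρR : R₀ ≤ ρ := le_trans (le_max_left _ _) hρ
    have hρ0 : 0 < ρ := lt_of_lt_of_le hR₀pos hρR
    apply (main_comp ρ hρR).mp
    have hπρ : Real.pi/ρ ≤ r₀ := by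
      have h1 : Real.pi/r₀ ≤ ρ := le_trans (le_max_right _ _) hρ
      rw [div_le_iff₀ hρ0]
      rw [div_le_iff₀ hr₀] at h1
      nlinarith
    have hsub : Set.Ioo 0 (Real.pi/ρ) ⊆ Metric.ball (0:ℝ) r₀ := by
      rintro t ⟨ht1, ht2⟩
      rw [Real.ball_eq_Ioo]
      constructor
      · rw [zero_sub]; linarith
      · rw [zero_add]; linarith
    exact lt_of_le_of_lt (lintegral_mono' (Measure.restrict_mono hsub le_rfl) le_rfl) hfin
  · rintro ⟨ρ₀, hρ₀, hall⟩
    have h1 := hall (max ρ₀ R₀) (le_max_left _ _)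
    have h2 := (main_comp (max ρ₀ R₀) (le_max_right _ _)).mpr h1
    have hm0 : 0 < max ρ₀ R₀ := lt_of_lt_of_le hR₀pos (le_max_right _ _)
    exact ⟨Real.pi/(max ρ₀ R₀), div_pos hπ hm0, (ball_iff _ (div_pos hπ hm0)).mpr h2⟩
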